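/- For any n-point configuration p_1,...,p_n ∈ ℝ^m, there exists a neighborhood U of (p_1,...,p_n) in (ℝ^m)^n such that every configuration (q_1,...,q_n) ∈ U having the same distribution of pairwise distances as (p_1,...,p_n) is obtained from (p_1,...,p_n) by a rigid motion composed with a relabeling of the points. -/

import Mathlib

/- Auxiliary lemma: a finite set of reals is uniformly separated. -/
lemma sepA_aux (V : Finset ℝ) : ∃ ε > (0:ℝ), ∀ a ∈ V, ∀ b ∈ V, |a - b| < ε → a = b := by
  classical
  set D : Finset ℝ :=
    ((V ×ˢ V).filter fun ab => ab.1 ≠ ab.2).image fun ab => |ab.1 - ab.2| with hD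
  by_cases hne : D.Nonempty
  · refine ⟨D.min' hne, ?_, ?_⟩
    · obtain ⟨ab, hab, habv⟩ := Finset.mem_image.1 (D.min'_mem hne)
      rw [Finset.mem_filter] at hab
      rw [← habv]
      exact abs_pos.2 (sub_ne_zero.2 hab.2)
    · intro a ha b hb hlt
      by_contra hne'
      have hmem : |a - b| ∈ D := Finset.mem_image.2
        ⟨(a, b), Finset.mem_filter.2 ⟨Finset.mem_product.2 ⟨ha, hb⟩, hne'⟩, rfl⟩
      exact absurd (D.min'_le _ hmem) (not_le.2 hlt)
  · refine ⟨1, one_pos, ?_⟩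
    intro a ha b hb _
    by_contra hne'
    exact hne ⟨_, Finset.mem_image.2
      ⟨(a, b), Finset.mem_filter.2 ⟨Finset.mem_product.2 ⟨ha, hb⟩, hne'⟩, rfl⟩⟩

/- Auxiliary lemma: two configurations with the same labeled distances differ by a
linear isometry plus a translation. -/
lemma congB_aux (m n : ℕ) (p q : Fin n → EuclideanSpace ℝ (Fin m)) (i0 : Fin n)
    (hd : ∀ i j, dist (q i) (q j) = dist (p i) (p j)) :
    ∃ f : EuclideanSpace ℝ (Fin m) →ₗᵢ[ℝ] EuclideanSpace ℝ (Fin m),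
      ∀ i, f (p i) + (q i0 - f (p i0)) = q i := by
  classical
  set v : Fin n → EuclideanSpace ℝ (Fin m) := fun i => p i - p i0 with hv
  set w : Fin n → EuclideanSpace ℝ (Fin m) := fun i => q i - q i0 with hw
  have hnorm : ∀ i, ‖w i‖ = ‖v i‖ := by
    intro i
    simp only [hv, hw, ← dist_eq_norm]
    exact hd i i0
  have hsub : ∀ i j, ‖w i - w j‖ = ‖v i - v j‖ := by
    intro i j
    have h1 : w i - w j = q i - q j := by simp only [hw]; abel
    have h2 : v i - v j = p i - p j := by simp only [hv]; abel
    rw [h1, h2, ← dist_eq_norm, ← dist_eq_norm]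
    exact hd i j
  have hgram : ∀ i j, (inner ℝ (w i) (w j) : ℝ) = inner ℝ (v i) (v j) := by
    intro i j
    rw [real_inner_eq_norm_mul_self_add_norm_mul_self_sub_norm_sub_mul_self_div_two,
      real_inner_eq_norm_mul_self_add_norm_mul_self_sub_norm_sub_mul_self_div_two,
      hnorm, hnorm, hsub]
  set L : (Fin n → ℝ) →ₗ[ℝ] EuclideanSpace ℝ (Fin m) := Fintype.linearCombination ℝ v with hL
  set L' : (Fin n → ℝ) →ₗ[ℝ] EuclideanSpace ℝ (Fin m) := Fintype.linearCombination ℝ w with hL'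
  have hLa : ∀ c, L c = ∑ i, c i • v i := fun c => by
    simp [hL, Fintype.linearCombination_apply]
  have hL'a : ∀ c, L' c = ∑ i, c i • w i := fun c => by
    simp [hL', Fintype.linearCombination_apply]
  have hnn : ∀ c, ‖L' c‖ = ‖L c‖ := by
    intro c
    have h1 : (inner ℝ (L' c) (L' c) : ℝ) = inner ℝ (L c) (L c) := by
      rw [hLa, hL'a, inner_sum, inner_sum]
      refine Finset.sum_congr rfl fun j _ => ?_
      rw [sum_inner, sum_inner]
      refine Finset.sum_congr rfl fun i _ => ?_
      rw [real_inner_smul_left, real_inner_smul_left, real_inner_smul_right,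
        real_inner_smul_right, hgram]
    rw [@norm_eq_sqrt_real_inner, @norm_eq_sqrt_real_inner, h1]
  have hker : LinearMap.ker L ≤ LinearMap.ker L' := by
    intro c hc
    rw [LinearMap.mem_ker] at hc ⊢
    have := hnn c
    rw [hc, norm_zero, norm_eq_zero] at this
    exact this
  set g0 : ((Fin n → ℝ) ⧸ LinearMap.ker L) →ₗ[ℝ] EuclideanSpace ℝ (Fin m) :=
    Submodule.liftQ _ L' hker with hg0
  set g : (LinearMap.range L) →ₗ[ℝ] EuclideanSpace ℝ (Fin m) :=
    g0 ∘ₗ (L.quotKerEquivRange.symm : LinearMap.range L →ₗ[ℝ] _) with hgdef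
  have hgapp : ∀ c : Fin n → ℝ, ∀ h, g ⟨L c, h⟩ = L' c := by
    intro c h
    have h1 : L.quotKerEquivRange.symm ⟨L c, h⟩ = Submodule.Quotient.mk c :=
      L.quotKerEquivRange_symm_apply_image c h
    simp only [hgdef, LinearMap.comp_apply, LinearEquiv.coe_coe, h1, hg0]
    exact Submodule.liftQ_apply _ _ _
  have hgnorm : ∀ s : LinearMap.range L, ‖g s‖ = ‖s‖ := by
    rintro ⟨-, c, rfl⟩
    rw [hgapp c (LinearMap.mem_range_self L c)]
    rw [hnn c]
    rfl
  set gI : (LinearMap.range L) →ₗᵢ[ℝ] EuclideanSpace ℝ (Fin m) := ⟨g, hgnorm⟩ with hgI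
  set f : EuclideanSpace ℝ (Fin m) →ₗᵢ[ℝ] EuclideanSpace ℝ (Fin m) := gI.extend with hf
  have hvmem : ∀ i, v i ∈ LinearMap.range L := by
    intro i
    refine ⟨Pi.single i 1, ?_⟩
    rw [hLa]
    simp [Pi.single_apply, ite_smul]
  have hfv : ∀ i, f (v i) = w i := by
    intro i
    have hL1 : L (Pi.single i 1) = v i := by
      rw [hLa]; simp [Pi.single_apply, ite_smul]
    have hL1' : L' (Pi.single i 1) = w i := by
      rw [hL'a]; simp [Pi.single_apply, ite_smul]
    have h1 := gI.extend_apply ⟨v i, hvmem i⟩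
    have h2 : (⟨v i, hvmem i⟩ : LinearMap.range L)
        = ⟨L (Pi.single i 1), LinearMap.mem_range_self L _⟩ := Subtype.ext hL1.symm
    calc f (v i) = gI ⟨v i, hvmem i⟩ := h1
      _ = g ⟨L (Pi.single i 1), LinearMap.mem_range_self L _⟩ := by rw [h2]; rfl
      _ = L' (Pi.single i 1) := hgapp _ _
      _ = w i := hL1'
  refine ⟨f, fun i => ?_⟩
  have h3 := hfv i
  simp only [hv, hw, map_sub] at h3
  rw [sub_eq_sub_iff_add_eq_add] at h3
  rw [add_sub, h3]
  abel

/- Auxiliary lemma: a linear isometry of Euclidean space is given by an orthogonal matrix. -/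
lemma matC_aux (m : ℕ) (f : EuclideanSpace ℝ (Fin m) →ₗᵢ[ℝ] EuclideanSpace ℝ (Fin m)) :
    ∃ M : Matrix (Fin m) (Fin m) ℝ, M ∈ Matrix.orthogonalGroup (Fin m) ℝ ∧
      ∀ x : EuclideanSpace ℝ (Fin m),
        (WithLp.equiv 2 (Fin m → ℝ)).symm (M.mulVec x) = f x := by
  set e := WithLp.linearEquiv 2 ℝ (Fin m → ℝ)
  set g : (Fin m → ℝ) →ₗ[ℝ] (Fin m → ℝ) :=
    e.toLinearMap ∘ₗ f.toLinearMap ∘ₗ e.symm.toLinearMap with hg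
  refine ⟨LinearMap.toMatrix' g, ?_, ?_⟩
  · rw [Matrix.mem_orthogonalGroup_iff']
    ext i j
    have h1 : ((LinearMap.toMatrix' g).transpose * (LinearMap.toMatrix' g)) i j
        = ∑ k, (LinearMap.toMatrix' g) k i * (LinearMap.toMatrix' g) k j := by
      simp [Matrix.mul_apply, Matrix.transpose_apply]
    have hcol : ∀ i k, (LinearMap.toMatrix' g) k i = g (Pi.single i 1) k := by
      intro i k
      rw [LinearMap.toMatrix'_apply]
    have h2 : ∑ k, (LinearMap.toMatrix' g) k i * (LinearMap.toMatrix' g) k j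
        = (inner ℝ (f (e.symm (Pi.single i 1))) (f (e.symm (Pi.single j 1))) : ℝ) := by
      rw [PiLp.inner_apply]
      refine Finset.sum_congr rfl fun k _ => ?_
      rw [hcol, hcol]
      simp [hg]
      exact mul_comm _ _
    rw [h1, h2, f.inner_map_map]
    have h3 : (inner ℝ (e.symm (Pi.single i 1)) (e.symm (Pi.single j 1)) : ℝ)
        = ∑ k, Pi.single i (1:ℝ) k * Pi.single j (1:ℝ) k := by
      rw [PiLp.inner_apply]; exact Finset.sum_congr rfl fun k _ => mul_comm _ _
    rw [h3]
    by_cases h : i = j <;> simp [h, Pi.single_apply, Matrix.one_apply, eq_comm]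
  · intro x
    have h6 : (LinearMap.toMatrix' g).mulVec (e x) = g (e x) := by
      rw [← Matrix.toLin'_apply, Matrix.toLin'_toMatrix']
    have h4 : (WithLp.equiv 2 (Fin m → ℝ)).symm ((LinearMap.toMatrix' g).mulVec (e x)) = f x := by
      rw [h6]
      simp [hg]
      rfl
    exact h4

/-- The distribution of pairwise distances of an `n`-point configuration:
the multiset of distances over all unordered pairs of distinct indices. -/
noncomputable def distDistribution {m n : ℕ} (p : Fin n → EuclideanSpace ℝ (Fin m)) : Multiset ℝ :=
  (((Finset.univ : Finset (Sym2 (Fin n))).filter fun z => ¬ z.IsDiag).val).map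
    (Sym2.lift ⟨fun i j => dist (p i) (p j), fun _ _ => dist_comm _ _⟩)

theorem stmt_7 (m n : ℕ) (p : Fin n → EuclideanSpace ℝ (Fin m)) :
    ∃ U ∈ nhds p, ∀ q ∈ U, distDistribution q = distDistribution p →
      ∃ M : Matrix (Fin m) (Fin m) ℝ, M ∈ Matrix.orthogonalGroup (Fin m) ℝ ∧
        ∃ T : EuclideanSpace ℝ (Fin m), ∃ π : Equiv.Perm (Fin n),
          ∀ i, (WithLp.equiv 2 (Fin m → ℝ)).symm (M.mulVec (p i)) + T = q (π i) := by
  classical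
  obtain ⟨ε, hεpos, hsep⟩ :=
    sepA_aux (Finset.image (fun z : Fin n × Fin n => dist (p z.1) (p z.2)) Finset.univ)
  set U : Set (Fin n → EuclideanSpace ℝ (Fin m)) :=
    {q | ∀ z : Fin n × Fin n, |dist (q z.1) (q z.2) - dist (p z.1) (p z.2)| < ε} with hU
  have hUopen : IsOpen U := by
    have : U = ⋂ z : Fin n × Fin n,
        {q : Fin n → EuclideanSpace ℝ (Fin m) |
          |dist (q z.1) (q z.2) - dist (p z.1) (p z.2)| < ε} := by
      ext q; simp [hU, Set.mem_iInter]
    rw [this]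
    refine isOpen_iInter_of_finite fun z => ?_
    have hcont : Continuous fun q : Fin n → EuclideanSpace ℝ (Fin m) =>
        |dist (q z.1) (q z.2) - dist (p z.1) (p z.2)| :=
      (((continuous_apply z.1).dist (continuous_apply z.2)).sub continuous_const).abs
    exact isOpen_Iio.preimage hcont
  have hpU : p ∈ U := by
    intro z
    simpa using hεpos
  refine ⟨U, hUopen.mem_nhds hpU, ?_⟩
  intro q hqU hdist
  -- labeled distances agree
  have hq : ∀ i j, dist (q i) (q j) = dist (p i) (p j) := by
    intro i j
    by_cases hij : i = j
    · simp [hij]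
    have hmem : dist (q i) (q j) ∈ distDistribution q := by
      unfold distDistribution
      rw [Multiset.mem_map]
      refine ⟨s(i, j), ?_, by simp⟩
      rw [Finset.mem_val, Finset.mem_filter]
      exact ⟨Finset.mem_univ _, by simpa using hij⟩
    rw [hdist] at hmem
    unfold distDistribution at hmem
    rw [Multiset.mem_map] at hmem
    obtain ⟨z, hz, hzv⟩ := hmem
    induction z using Sym2.ind with
    | _ a b =>
      simp only [Sym2.lift_mk] at hzv
      have h1 : dist (p a) (p b) ∈
          Finset.image (fun z : Fin n × Fin n => dist (p z.1) (p z.2)) Finset.univ :=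
        Finset.mem_image.2 ⟨(a, b), Finset.mem_univ _, rfl⟩
      have h2 : dist (p i) (p j) ∈
          Finset.image (fun z : Fin n × Fin n => dist (p z.1) (p z.2)) Finset.univ :=
        Finset.mem_image.2 ⟨(i, j), Finset.mem_univ _, rfl⟩
      have h3 : |dist (p a) (p b) - dist (p i) (p j)| < ε := by
        rw [hzv]; exact hqU (i, j)
      rw [← hzv]
      exact hsep _ h1 _ h2 h3
  by_cases hn : n = 0
  · subst hn
    refine ⟨1, (Matrix.mem_orthogonalGroup_iff _ _).2 (by simp), 0, Equiv.refl _, fun i => i.elim0⟩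
  · have hpos : 0 < n := Nat.pos_of_ne_zero hn
    obtain ⟨f, hf⟩ := congB_aux m n p q ⟨0, hpos⟩ hq
    obtain ⟨M, hM, hMf⟩ := matC_aux m f
    refine ⟨M, hM, q ⟨0, hpos⟩ - f (p ⟨0, hpos⟩), Equiv.refl _, fun i => ?_⟩
    rw [hMf]
    exact hf i
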